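/- Let J̃ be a para-Hermitian structure on V and let Θ ∈ S²₋(V*)⊗S²(V*) satisfy K_{J̃}Θ = 0. Then the algebraic curvature tensor LΘ satisfies the para-Kaehler identity (LΘ)(x,y,z,w) = −(LΘ)(J̃x,J̃y,z,w) for all x,y,z,w. -/

import Mathlib

/-- If `Θ ∈ S²₋(V*)⊗S²(V*)` lies in the kernel of `K_{J̃}`, then `LΘ` satisfies the
para-Kaehler identity. -/
theorem L_of_ker_K_paraHermitian_satisfies_paraKaehler_identity
    {V : Type*} [AddCommGroup V] [Module ℝ V] [FiniteDimensional ℝ V]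
    {n : ℕ} (hn : 2 ≤ n) (hdim : Module.finrank ℝ V = 2 * n)
    (B : V →ₗ[ℝ] V →ₗ[ℝ] ℝ)
    (hBsymm : ∀ x y : V, B x y = B y x)
    -- neutral signature (n, n)
    (b : Module.Basis (Fin (2 * n)) ℝ V)
    (hb : ∀ i j : Fin (2 * n),
      B (b i) (b j) = if i = j then (if (i : ℕ) < n then 1 else -1) else 0)
    (Jt : V →ₗ[ℝ] V)
    (hJ2 : ∀ x : V, Jt (Jt x) = x)
    (hJi : ∀ x y : V, B (Jt x) (Jt y) = - B x y)
    (Θ : V →ₗ[ℝ] V →ₗ[ℝ] V →ₗ[ℝ] V →ₗ[ℝ] ℝ)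
    (hs1 : ∀ x y z w : V, Θ x y z w = Θ y x z w)
    (hs2 : ∀ x y z w : V, Θ x y z w = Θ x y w z)
    (hsJ : ∀ x y z w : V, Θ (Jt x) (Jt y) z w = - Θ x y z w)
    (hker : ∀ x y z w : V, Θ x (Jt y) z w + Θ y (Jt z) x w + Θ z (Jt x) y w = 0) :
    ∀ x y z w : V,
      Θ x z y w + Θ y w x z - Θ x w y z - Θ y z x w
      = -(Θ (Jt x) z (Jt y) w + Θ (Jt y) w (Jt x) z
          - Θ (Jt x) w (Jt y) z - Θ (Jt y) z (Jt x) w) := by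
  intro x y z w
  have h1 := hker x (Jt y) z w
  have h2 := hker x (Jt y) w z
  have h3 := hker (Jt x) y z w
  have h4 := hker (Jt x) y w z
  simp only [hJ2] at h1 h2 h3 h4
  have h5 := hsJ y (Jt z) (Jt x) w
  rw [hJ2] at h5
  have h6 := hsJ y (Jt w) (Jt x) z
  rw [hJ2] at h6
  linarith [h1, h2, h3, h4, h5, h6, hsJ y z x w, hsJ y w x z, hsJ x y z w,
    hsJ x y w z, hs1 z (Jt x) (Jt y) w, hs1 w (Jt x) (Jt y) z,
    hs1 z x y w, hs1 w x y z]
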